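/- Let S = { (⌊⌊w⌋⌋, w), (⌊uv⌋, ⌊v⌋⌊u⌋), (⌊1⌋, 1) : w ∈ 𝔐(X), u,v ∈ 𝔐(X)\{1} }. For rules α, β ∈ S with q₁|_{lhs(α)} = q₂|_{lhs(β)}, if the placements (lhs(α), q₁) and (lhs(β), q₂) are nested, then q₁|_{rhs(α)} and q₂|_{rhs(β)} are joinable under Π_S. -/

import Mathlib

namespace OpMon

/-- Letters of bracketed words: either a variable or a bracketed word. -/
inductive Letter (X : Type) : Type
  | of : X → Letter X
  | br : List (Letter X) → Letter X

/-- The free operated monoid `𝔐(X)`, modeled as lists of letters (free monoid on letters). -/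
abbrev M (X : Type) := List (Letter X)

/-- The operator `⌊ ⌋` on `𝔐(X)`. -/
def L {X : Type} (w : M X) : M X := [Letter.br w]

mutual
  /-- Substitute each variable by a word (letter version). -/
  def bindL {Y Z : Type} : Letter Y → (Y → M Z) → M Z
    | .of y, f => f y
    | .br w, f => [.br (bindW w f)]
  /-- Substitute each variable by a word (word version). -/
  def bindW {Y Z : Type} : M Y → (Y → M Z) → M Z
    | [], _ => []
    | a :: as, f => bindL a f ++ bindW as f
end

mutual
  /-- Count occurrences of variables satisfying `p` (letter version). -/
  def cntL {Y : Type} (p : Y → Bool) : Letter Y → ℕ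
    | .of y => if p y then 1 else 0
    | .br w => cntW p w
  /-- Count occurrences of variables satisfying `p` (word version). -/
  def cntW {Y : Type} (p : Y → Bool) : M Y → ℕ
    | [] => 0
    | a :: as => cntL p a + cntW p as
end

/-- The star letter `⋆`, modeled as `none`. -/
def starW {X : Type} : M (Option X) := [Letter.of none]

/-- `q` is a `⋆`-bracketed word: exactly one occurrence of `⋆`. -/
def IsStar {X : Type} (q : M (Option X)) : Prop :=
  cntW (fun o => o.isNone) q = 1

/-- Substitution `q|_u` of `u` for `⋆`. -/
def sub {X : Type} (q : M (Option X)) (u : M X) : M X :=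
  bindW q (fun o => Option.elim o u (fun x => [Letter.of x]))

/-- Embed `𝔐(X)` into `𝔐(X ∪ {⋆})`. -/
def emb {X : Type} (w : M X) : M (Option X) :=
  bindW w (fun x => [Letter.of (some x)])

/-- Substitute a `⋆`-word `r` for the `⋆` of `q`, yielding a word on `X ∪ {⋆}`. -/
def subS {X : Type} (q r : M (Option X)) : M (Option X) :=
  bindW q (fun o => Option.elim o r (fun x => [Letter.of (some x)]))

/-- `p` is a `(⋆₁,⋆₂)`-bracketed word (⋆₁ = `none`, ⋆₂ = `some none`). -/
def IsStar2 {X : Type} (p : M (Option (Option X))) : Prop :=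
  cntW (fun o => o.isNone) p = 1 ∧
  cntW (fun o => match o with | some none => true | _ => false) p = 1

/-- Substitution `p|_{u₁,u₂}`. -/
def sub2 {X : Type} (p : M (Option (Option X))) (u₁ u₂ : M X) : M X :=
  bindW p (fun o => match o with
    | none => u₁
    | some none => u₂
    | some (some x) => [Letter.of x])

/-- Substitution `p|_{u₁,⋆₂}`, a `⋆`-word. -/
def sub2L {X : Type} (p : M (Option (Option X))) (u₁ : M X) : M (Option X) :=
  bindW p (fun o => match o with
    | none => emb u₁
    | some none => [Letter.of none]
    | some (some x) => [Letter.of (some x)])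

/-- Substitution `p|_{⋆₁,u₂}`, a `⋆`-word. -/
def sub2R {X : Type} (p : M (Option (Option X))) (u₂ : M X) : M (Option X) :=
  bindW p (fun o => match o with
    | none => [Letter.of none]
    | some none => emb u₂
    | some (some x) => [Letter.of (some x)])

/-- `R^c`. -/
def Rc {X : Type} (R : Set (M X × M X)) : Set (M X × M X) :=
  {p | ∃ q a b, IsStar q ∧ (a, b) ∈ R ∧ p = (sub q a, sub q b)}

/-- Inverse relation `R⁻¹`. -/
def relInv {X : Type} (R : Set (M X × M X)) : Set (M X × M X) :=
  {p | (p.2, p.1) ∈ R}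

/-- Closure under right mult. (C1), left mult. (C2), and the operator (C3). -/
def Closed {X : Type} (S : Set (M X × M X)) : Prop :=
  ∀ a b, (a, b) ∈ S → ∀ c : M X,
    (a ++ c, b ++ c) ∈ S ∧ (c ++ a, c ++ b) ∈ S ∧ (L a, L b) ∈ S

/-- Composition of relations. -/
def relComp {X : Type} (R S : Set (M X × M X)) : Set (M X × M X) :=
  {p | ∃ c, (p.1, c) ∈ R ∧ (c, p.2) ∈ S}

/-- `relPow R n = R^(n+1)`. -/
def relPow {X : Type} (R : Set (M X × M X)) : ℕ → Set (M X × M X)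
  | 0 => R
  | n + 1 => relComp (relPow R n) R

/-- Operated congruence. -/
def IsOpCong {X : Type} (T : Set (M X × M X)) : Prop :=
  (∀ a, (a, a) ∈ T) ∧ (∀ a b, (a, b) ∈ T → (b, a) ∈ T) ∧
  (∀ a b c, (a, b) ∈ T → (b, c) ∈ T → (a, c) ∈ T) ∧ Closed T

/-- The operated congruence `⟨R⟩` generated by `R`. -/
def ocong {X : Type} (R : Set (M X × M X)) : Set (M X × M X) :=
  ⋂₀ {T | IsOpCong T ∧ R ⊆ T}

/-- Equivalence relation (as a set of pairs). -/
def IsEqv {X : Type} (T : Set (M X × M X)) : Prop :=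
  (∀ a, (a, a) ∈ T) ∧ (∀ a b, (a, b) ∈ T → (b, a) ∈ T) ∧
  (∀ a b c, (a, b) ∈ T → (b, c) ∈ T → (a, c) ∈ T)

/-- The equivalence `T^e` generated by `T`. -/
def eqgen {X : Type} (T : Set (M X × M X)) : Set (M X × M X) :=
  ⋂₀ {E | IsEqv E ∧ T ⊆ E}

/-- A monomial order: a well-founded linear order compatible with the operations. -/
def IsMonomialOrder {X : Type} (lt : M X → M X → Prop) : Prop :=
  WellFounded lt ∧
  (∀ a b, a = b ∨ lt a b ∨ lt b a) ∧
  (∀ a b c, lt a b → lt b c → lt a c) ∧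
  (∀ u v w, lt u v → lt (u ++ w) (v ++ w) ∧ lt (w ++ u) (w ++ v) ∧ lt (L u) (L v))

/-- The term-rewriting system `Π_S`. -/
def PiS {X : Type} (lt : M X → M X → Prop) (S : Set (M X × M X)) : Set (M X × M X) :=
  {p | ∃ q t v, IsStar q ∧ ((t, v) ∈ S ∨ (v, t) ∈ S) ∧ lt v t ∧ p = (sub q t, sub q v)}

/-- One-step rewriting. -/
def Rew {X : Type} (lt : M X → M X → Prop) (S : Set (M X × M X)) (a b : M X) : Prop :=
  (a, b) ∈ PiS lt S

/-- Joinability under `Π_S`. -/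
def Joinable {X : Type} (lt : M X → M X → Prop) (S : Set (M X × M X)) (f g : M X) : Prop :=
  ∃ h, Relation.ReflTransGen (Rew lt S) f h ∧ Relation.ReflTransGen (Rew lt S) g h

/-- Termination of `Π_S`. -/
def Terminating {X : Type} (lt : M X → M X → Prop) (S : Set (M X × M X)) : Prop :=
  ¬ ∃ f : ℕ → M X, ∀ n, Rew lt S (f n) (f (n + 1))

/-- Confluence of `Π_S`. -/
def Confluent {X : Type} (lt : M X → M X → Prop) (S : Set (M X × M X)) : Prop :=
  ∀ f g h, Relation.ReflTransGen (Rew lt S) f g → Relation.ReflTransGen (Rew lt S) f h →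
    Joinable lt S g h

/-- Irreducible elements: `𝔐(X) \ Dom(Π_S)`. -/
def Irr {X : Type} (lt : M X → M X → Prop) (S : Set (M X × M X)) : Set (M X) :=
  {f | ∀ g, ¬ Rew lt S f g}

/-- Predecessors of `a`. -/
def Pre {X : Type} (lt : M X → M X → Prop) (S : Set (M X × M X)) (a : M X) : Set (M X) :=
  {f | Relation.ReflTransGen (Rew lt S) f a}

/-- `W` is a section of `⟨S⟩`: every congruence class meets `W` in exactly one element. -/
def IsSection {X : Type} (S : Set (M X × M X)) (W : Set (M X)) : Prop :=
  ∀ a : M X, ∃! w, w ∈ W ∧ (a, w) ∈ ocong S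

/-- Separated placements `(u₁,q₁)`, `(u₂,q₂)` in `w`. -/
def Separated {X : Type} (u₁ : M X) (q₁ : M (Option X)) (u₂ : M X) (q₂ : M (Option X))
    (w : M X) : Prop :=
  ∃ p, IsStar2 p ∧ q₁ = sub2R p u₂ ∧ q₂ = sub2L p u₁ ∧ w = sub2 p u₁ u₂

/-- Nested placements: one context is a subcontext of the other. -/
def Nested {X : Type} (q₁ q₂ : M (Option X)) : Prop :=
  ∃ q, IsStar q ∧ (q₂ = subS q₁ q ∨ q₁ = subS q₂ q)

/-- Intersecting placements `(u₁,q₁)`, `(u₂,q₂)` in `w`. -/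
def Intersecting {X : Type} (w u₁ : M X) (q₁ : M (Option X)) (u₂ : M X)
    (q₂ : M (Option X)) : Prop :=
  ∃ q a b c, IsStar q ∧ a ≠ ([] : M X) ∧ b ≠ ([] : M X) ∧ c ≠ ([] : M X) ∧
    w = sub q (a ++ b ++ c) ∧
    ((q₁ = subS q (starW ++ emb c) ∧ q₂ = subS q (emb a ++ starW)) ∨
     (q₁ = subS q (emb a ++ starW) ∧ q₂ = subS q (starW ++ emb c)))

/-- Defining relations of the free `∗`-monoid. -/
def SStar (X : Type) : Set (M X × M X) :=
  {p | (∃ w : M X, p = (L (L w), w)) ∨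
       (∃ u v : M X, u ≠ [] ∧ v ≠ [] ∧ p = (L (u ++ v), L v ++ L u)) ∨
       p = (L [], [])}

/-- Defining relations of the free group. -/
def SGrp (X : Type) : Set (M X × M X) :=
  {p | (∃ w : M X, p = (L (L w), w)) ∨
       (∃ u v : M X, u ≠ [] ∧ v ≠ [] ∧ p = (L (u ++ v), L v ++ L u)) ∨
       (∃ w : M X, p = (L w ++ w, [])) ∨
       (∃ w : M X, p = (w ++ L w, []))}



section Aux
variable {X : Type}

@[simp] lemma bindW_nil {Y Z : Type} (f : Y → M Z) : bindW [] f = [] := rfl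
@[simp] lemma bindW_cons {Y Z : Type} (a : Letter Y) (as : M Y) (f : Y → M Z) :
    bindW (a :: as) f = bindL a f ++ bindW as f := rfl
@[simp] lemma bindL_of {Y Z : Type} (y : Y) (f : Y → M Z) : bindL (.of y) f = f y := rfl
@[simp] lemma bindL_br {Y Z : Type} (w : M Y) (f : Y → M Z) :
    bindL (.br w) f = [.br (bindW w f)] := rfl

lemma bindW_append {Y Z : Type} (a b : M Y) (f : Y → M Z) :
    bindW (a ++ b) f = bindW a f ++ bindW b f := by
  induction a with
  | nil => simp
  | cons x xs ih => simp [ih]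

mutual
  lemma bindL_bindW {Y Z W : Type} (a : Letter Y) (f : Y → M Z) (g : Z → M W) :
      bindW (bindL a f) g = bindL a (fun y => bindW (f y) g) := by
    cases a with
    | of y => rfl
    | br w => simp [bindW_bindW w f g]
  lemma bindW_bindW {Y Z W : Type} (w : M Y) (f : Y → M Z) (g : Z → M W) :
      bindW (bindW w f) g = bindW w (fun y => bindW (f y) g) := by
    cases w with
    | nil => rfl
    | cons a as => simp [bindW_append, bindL_bindW a f g, bindW_bindW as f g]
end

mutual
  lemma bindL_pure {Y : Type} (a : Letter Y) : bindL a (fun y => [Letter.of y]) = [a] := by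
    cases a with
    | of y => rfl
    | br w => simp [bindW_pure w]
  lemma bindW_pure {Y : Type} (w : M Y) : bindW w (fun y => [Letter.of y]) = w := by
    cases w with
    | nil => rfl
    | cons a as => simp [bindL_pure a, bindW_pure as]
end

@[simp] lemma cntW_nil {Y : Type} (p : Y → Bool) : cntW p [] = 0 := rfl
@[simp] lemma cntW_cons {Y : Type} (p : Y → Bool) (a : Letter Y) (as : M Y) :
    cntW p (a :: as) = cntL p a + cntW p as := rfl

lemma cntW_append {Y : Type} (p : Y → Bool) (a b : M Y) :
    cntW p (a ++ b) = cntW p a + cntW p b := by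
  induction a with
  | nil => simp
  | cons x xs ih => simp [ih]; omega

@[simp] lemma sub_append (q r : M (Option X)) (u : M X) :
    sub (q ++ r) u = sub q u ++ sub r u := by
  simp [sub, bindW_append]

@[simp] lemma sub_starW (u : M X) : sub starW u = u := by
  simp [sub, starW, bindW, bindL, Option.elim]

@[simp] lemma sub_br (q : M (Option X)) (u : M X) :
    sub [Letter.br q] u = L (sub q u) := by
  simp [sub, bindW, bindL, L]

@[simp] lemma sub_emb (a : M X) (u : M X) : sub (emb a) u = a := by
  simp [sub, emb, bindW_bindW]
  exact bindW_pure a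

@[simp] lemma emb_nil : emb ([] : M X) = [] := rfl

@[simp] lemma sub_nil (u : M X) : sub ([] : M (Option X)) u = [] := rfl

@[simp] lemma sub_cons_br (q : M (Option X)) (r : M (Option X)) (u : M X) :
    sub (Letter.br q :: r) u = Letter.br (sub q u) :: sub r u := rfl

@[simp] lemma sub_cons_star (r : M (Option X)) (u : M X) :
    sub (Letter.of none :: r) u = u ++ sub r u := rfl

@[simp] lemma sub_cons_some (x : X) (r : M (Option X)) (u : M X) :
    sub (Letter.of (some x) :: r) u = Letter.of x :: sub r u := rfl

@[simp] lemma subS_append (q r : M (Option X)) (s : M (Option X)) :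
    subS (q ++ r) s = subS q s ++ subS r s := by
  simp [subS, bindW_append]

lemma sub_subS (q r : M (Option X)) (u : M X) :
    sub (subS q r) u = sub q (sub r u) := by
  simp only [sub, subS, bindW_bindW]
  congr 1
  funext o
  cases o with
  | none => rfl
  | some x => rfl

mutual
  lemma cntL_emb_aux (a : Letter X) :
      cntW (fun o => o.isNone) (bindL a (fun x => [Letter.of (some x)])) = 0 := by
    cases a with
    | of y => simp [cntL]
    | br w => simp [cntL, cntW_emb_aux w]
  lemma cntW_emb_aux (w : M X) :
      cntW (fun o => o.isNone) (bindW w (fun x => [Letter.of (some x)])) = 0 := by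
    cases w with
    | nil => rfl
    | cons a as => simp [cntW_append, cntL_emb_aux a, cntW_emb_aux as]
end

@[simp] lemma cntW_emb (w : M X) : cntW (fun o => o.isNone) (emb w) = 0 :=
  cntW_emb_aux w

@[simp] lemma cntW_starW : cntW (fun o => o.isNone) (starW : M (Option X)) = 1 := by
  simp [starW, cntL]

@[simp] lemma cntW_br (w : M (Option X)) :
    cntW (fun o => o.isNone) [Letter.br w] = cntW (fun o => o.isNone) w := by
  simp [cntL]

mutual
  lemma cntL_subS_aux (r : M (Option X)) (a : Letter (Option X)) :
      cntW (fun o => o.isNone) (bindL a (fun o =>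
        Option.elim o r (fun x => [Letter.of (some x)])))
      = cntL (fun o => o.isNone) a * cntW (fun o => o.isNone) r := by
    cases a with
    | of y => cases y with
      | none => simp [cntL, Option.elim]
      | some x => simp [cntL, Option.elim]
    | br w =>
      have := cntW_subS_aux r w
      simp only [subS] at this
      simp [cntL, this]
  lemma cntW_subS_aux (r : M (Option X)) (w : M (Option X)) :
      cntW (fun o => o.isNone) (subS w r)
      = cntW (fun o => o.isNone) w * cntW (fun o => o.isNone) r := by
    cases w with
    | nil => simp [subS]
    | cons a as =>
      have : subS (a :: as) r = bindL a _ ++ subS as r := rfl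
      rw [this, cntW_append, cntL_subS_aux r a, cntW_subS_aux r as, cntW_cons]
      ring
end

lemma isStar_subS {q r : M (Option X)} (hq : IsStar q) (hr : IsStar r) :
    IsStar (subS q r) := by
  unfold IsStar at *
  rw [cntW_subS_aux r q, hq, hr]


/-- Structure of one-star words. -/
inductive Ctx {X : Type} : M (Option X) → Prop
  | top (a b : M X) : Ctx (emb a ++ starW ++ emb b)
  | nest (a b : M X) (q : M (Option X)) (h1 : IsStar q) (h2 : Ctx q) :
      Ctx (emb a ++ [Letter.br q] ++ emb b)

lemma emb_cons (a : Letter X) (as : M X) : emb (a :: as) = bindL a (fun x => [Letter.of (some x)]) ++ emb as := rfl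

mutual
  lemma embL_of_cnt_zero (a : Letter (Option X))
      (h : cntL (fun o => o.isNone) a = 0) :
      ∃ b : Letter X, [a] = bindL b (fun x => [Letter.of (some x)]) := by
    cases a with
    | of y =>
      cases y with
      | none => simp [cntL] at h
      | some x => exact ⟨.of x, rfl⟩
    | br w =>
      simp only [cntL] at h
      obtain ⟨b, hb⟩ := embW_of_cnt_zero w h
      exact ⟨.br b, by simp [emb] at hb ⊢; rw [← hb]⟩
  lemma embW_of_cnt_zero (w : M (Option X))
      (h : cntW (fun o => o.isNone) w = 0) :
      ∃ b : M X, w = emb b := by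
    cases w with
    | nil => exact ⟨[], rfl⟩
    | cons a as =>
      simp only [cntW_cons] at h
      obtain ⟨b, hb⟩ := embL_of_cnt_zero a (by omega)
      obtain ⟨bs, hbs⟩ := embW_of_cnt_zero as (by omega)
      exact ⟨b :: bs, by rw [emb_cons, ← hb, ← hbs]; rfl⟩
end

lemma ctx_cons_of (x : X) {t : M (Option X)} (h : Ctx t) :
    Ctx (Letter.of (some x) :: t) := by
  cases h with
  | top a b =>
    have : Letter.of (some x) :: (emb a ++ starW ++ emb b)
        = emb (.of x :: a) ++ starW ++ emb b := by
      rw [emb_cons]; rfl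
    rw [this]; exact Ctx.top _ _
  | nest a b q h1 h2 =>
    have : Letter.of (some x) :: (emb a ++ [Letter.br q] ++ emb b)
        = emb (.of x :: a) ++ [Letter.br q] ++ emb b := by
      rw [emb_cons]; rfl
    rw [this]; exact Ctx.nest _ _ _ h1 h2

lemma ctx_cons_br (w : M X) {t : M (Option X)} (h : Ctx t) :
    Ctx (Letter.br (emb w) :: t) := by
  cases h with
  | top a b =>
    have : Letter.br (emb w) :: (emb a ++ starW ++ emb b)
        = emb (.br w :: a) ++ starW ++ emb b := by
      rw [emb_cons]; rfl
    rw [this]; exact Ctx.top _ _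
  | nest a b q h1 h2 =>
    have : Letter.br (emb w) :: (emb a ++ [Letter.br q] ++ emb b)
        = emb (.br w :: a) ++ [Letter.br q] ++ emb b := by
      rw [emb_cons]; rfl
    rw [this]; exact Ctx.nest _ _ _ h1 h2

theorem ctx_of_isStar : ∀ q : M (Option X), IsStar q → Ctx q
  | [], h => by simp [IsStar] at h
  | .of none :: t, h => by
    have ht : cntW (fun o => o.isNone) t = 0 := by
      simp [IsStar, cntL] at h; omega
    obtain ⟨b, hb⟩ := embW_of_cnt_zero t ht
    have : Letter.of (none : Option X) :: t = emb [] ++ starW ++ emb b := by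
      simp [emb, starW, hb]
    rw [this]; exact Ctx.top _ _
  | .of (some x) :: t, h => by
    have ht : IsStar t := by simp [IsStar, cntL] at h ⊢; omega
    exact ctx_cons_of x (ctx_of_isStar t ht)
  | .br w :: t, h => by
    simp only [IsStar, cntW_cons, cntL] at h
    rcases Nat.eq_zero_or_pos (cntW (fun o => o.isNone) w) with hw | hw
    · obtain ⟨b, hb⟩ := embW_of_cnt_zero w hw
      have ht : IsStar t := by simp [IsStar]; omega
      subst hb
      exact ctx_cons_br b (ctx_of_isStar t ht)
    · have hw1 : IsStar w := by simp [IsStar]; omega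
      have ht : cntW (fun o => o.isNone) t = 0 := by omega
      obtain ⟨b, hb⟩ := embW_of_cnt_zero t ht
      have : (Letter.br w :: t : M (Option X)) = emb [] ++ [Letter.br w] ++ emb b := by
        simp [emb, hb]
      rw [this]
      exact Ctx.nest _ _ _ hw1 (ctx_of_isStar w hw1)
termination_by q => sizeOf q

lemma sub_inj_of_ctx {q : M (Option X)} (hC : Ctx q) :
    ∀ u v : M X, sub q u = sub q v → u = v := by
  induction hC with
  | top a b =>
    intro u v h
    simp only [sub_append, sub_emb, sub_starW, List.append_assoc] at h
    exact List.append_cancel_right (List.append_cancel_left h)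
  | nest a b q' h1 h2 ih =>
    intro u v h
    simp only [sub_append, sub_emb, sub_br, List.append_assoc] at h
    have := List.append_cancel_right (List.append_cancel_left h)
    simp only [L, List.cons.injEq, Letter.br.injEq, and_true] at this
    exact ih u v this

lemma sub_inj {q : M (Option X)} (hq : IsStar q) {u v : M X}
    (h : sub q u = sub q v) : u = v :=
  sub_inj_of_ctx (ctx_of_isStar q hq) u v h

lemma isStar_starW : IsStar (starW : M (Option X)) := by simp [IsStar]

lemma isStar_br {q : M (Option X)} (h : IsStar q) : IsStar [Letter.br q] := by
  simpa [IsStar, cntL] using h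

lemma isStar_glue (a b : M X) {q : M (Option X)} (h : IsStar q) :
    IsStar (emb a ++ q ++ emb b) := by
  simp [IsStar, cntW_append] at h ⊢; exact h

variable {lt : M X → M X → Prop}

lemma rew_step (hor : ∀ p ∈ SStar X, lt p.2 p.1) {t v : M X}
    (hr : (t, v) ∈ SStar X) {q : M (Option X)} (hq : IsStar q) :
    Rew lt (SStar X) (sub q t) (sub q v) :=
  ⟨q, t, v, hq, Or.inl hr, hor (t, v) hr, rfl⟩

lemma rew_ctx {S : Set (M X × M X)} {a b : M X} (h : Rew lt S a b)
    {q : M (Option X)} (hq : IsStar q) : Rew lt S (sub q a) (sub q b) := by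
  obtain ⟨r, t, v, hr, hm, hlt, hp⟩ := h
  obtain ⟨h1, h2⟩ := Prod.mk.injEq .. ▸ hp
  refine ⟨subS q r, t, v, isStar_subS hq hr, hm, hlt, ?_⟩
  simp only [Prod.mk.injEq] at hp
  rw [sub_subS, sub_subS, hp.1, hp.2]

lemma rtg_ctx {S : Set (M X × M X)} {a b : M X}
    (h : Relation.ReflTransGen (Rew lt S) a b) {q : M (Option X)} (hq : IsStar q) :
    Relation.ReflTransGen (Rew lt S) (sub q a) (sub q b) := by
  induction h with
  | refl => exact .refl
  | tail _ hstep ih => exact ih.tail (rew_ctx hstep hq)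

lemma joinable_refl {S : Set (M X × M X)} (a : M X) : Joinable lt S a a :=
  ⟨a, .refl, .refl⟩

lemma joinable_symm {S : Set (M X × M X)} {a b : M X} (h : Joinable lt S a b) :
    Joinable lt S b a := by
  obtain ⟨c, h1, h2⟩ := h; exact ⟨c, h2, h1⟩

lemma joinable_ctx {S : Set (M X × M X)} {a b : M X} (h : Joinable lt S a b)
    {q : M (Option X)} (hq : IsStar q) : Joinable lt S (sub q a) (sub q b) := by
  obtain ⟨c, h1, h2⟩ := h
  exact ⟨sub q c, rtg_ctx h1 hq, rtg_ctx h2 hq⟩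

lemma mem1 (w : M X) : (L (L w), w) ∈ SStar X := Or.inl ⟨w, rfl⟩
lemma mem2 {u v : M X} (hu : u ≠ []) (hv : v ≠ []) :
    (L (u ++ v), L v ++ L u) ∈ SStar X := Or.inr (Or.inl ⟨u, v, hu, hv, rfl⟩)
lemma mem3 : ((L [] : M X), ([] : M X)) ∈ SStar X := Or.inr (Or.inr rfl)

lemma split_mid {A : Type} {u v a b : List A} {l : A} (h : u ++ v = a ++ l :: b) :
    (∃ c, u = a ++ l :: c ∧ b = c ++ v) ∨ (∃ c, a = u ++ c ∧ v = c ++ l :: b) := by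
  rcases List.append_eq_append_iff.mp h with ⟨a', ha1, ha2⟩ | ⟨c', hc1, hc2⟩
  · exact Or.inr ⟨a', ha1, ha2⟩
  · cases c' with
    | nil =>
      simp at hc1 hc2
      exact Or.inr ⟨[], by simp [hc1], by simp [hc2]⟩
    | cons x t =>
      simp at hc2
      obtain ⟨hx, hb⟩ := hc2
      exact Or.inl ⟨t, by rw [hc1, hx], hb⟩

lemma single_eq_mid {A : Type} {x y : A} {a b : List A} (h : [x] = a ++ [y] ++ b) :
    a = [] ∧ b = [] ∧ x = y := by
  have hl := congrArg List.length h
  simp [List.length_append] at hl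
  have ha : a = [] := List.length_eq_zero_iff.mp (by omega)
  have hb : b = [] := List.length_eq_zero_iff.mp (by omega)
  subst ha; subst hb
  simp at h
  exact ⟨rfl, rfl, h⟩

lemma root (hor : ∀ p ∈ SStar X, lt p.2 p.1) {α β : M X × M X}
    (hα : α ∈ SStar X) (hβ : β ∈ SStar X) (h : α.1 = β.1) :
    Joinable lt (SStar X) α.2 β.2 := by
  rcases hα with ⟨w, hα⟩ | ⟨u, v, hu, hv, hα⟩ | hα <;>
    rcases hβ with ⟨w', hβ⟩ | ⟨u', v', hu', hv', hβ⟩ | hβ <;>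
      rw [hα, hβ] at h ⊢ <;> simp only [L] at h ⊢
  · -- (1,1)
    simp at h; subst h; exact joinable_refl _
  · -- (1,2)
    simp only [List.cons.injEq, Letter.br.injEq, and_true] at h
    have := congrArg List.length h
    have h1 : 1 ≤ u'.length := List.length_pos_iff.mpr hu'
    have h2 : 1 ≤ v'.length := List.length_pos_iff.mpr hv'
    simp [List.length_append] at this; omega
  · -- (1,3)
    simp at h
  · -- (2,1)
    simp only [List.cons.injEq, Letter.br.injEq, and_true] at h
    have := congrArg List.length h
    have h1 : 1 ≤ u.length := List.length_pos_iff.mpr hu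
    have h2 : 1 ≤ v.length := List.length_pos_iff.mpr hv
    simp [List.length_append] at this; omega
  · -- (2,2)
    simp only [List.cons.injEq, Letter.br.injEq, and_true] at h
    rcases List.append_eq_append_iff.mp h with ⟨c, hc1, hc2⟩ | ⟨c, hc1, hc2⟩
    · -- u' = u ++ c, v = c ++ v'
      rcases List.eq_nil_or_concat' c with rfl | hcne
      · simp at hc1 hc2; rw [hc1, hc2]; exact joinable_refl _
      · have hc : c ≠ [] := by rcases hcne with ⟨_, _, rfl⟩; simp
        refine ⟨L v' ++ L c ++ L u, .single ?_, .single ?_⟩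
        · have := rew_step hor (mem2 hc hv') (q := emb ([] : M X) ++ starW ++ emb (L u))
            (isStar_glue _ _ isStar_starW)
          rw [hc2]
          simpa [L] using this
        · have := rew_step hor (mem2 hu hc) (q := emb (L v') ++ starW ++ emb ([] : M X))
            (isStar_glue _ _ isStar_starW)
          rw [hc1]
          simpa [L] using this
    · -- u = u' ++ c, v' = c ++ v
      rcases List.eq_nil_or_concat' c with rfl | hcne
      · simp at hc1 hc2; rw [hc1, hc2]; exact joinable_refl _
      · have hc : c ≠ [] := by rcases hcne with ⟨_, _, rfl⟩; simp
        refine ⟨L v ++ L c ++ L u', .single ?_, .single ?_⟩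
        · have := rew_step hor (mem2 hu' hc) (q := emb (L v) ++ starW ++ emb ([] : M X))
            (isStar_glue _ _ isStar_starW)
          rw [hc1]
          simpa [L] using this
        · have := rew_step hor (mem2 hc hv) (q := emb ([] : M X) ++ starW ++ emb (L u'))
            (isStar_glue _ _ isStar_starW)
          rw [hc2]
          simpa [L] using this
  · -- (2,3)
    simp only [List.cons.injEq, Letter.br.injEq, and_true] at h
    exact absurd (List.append_eq_nil_iff.mp h).1 hu
  · -- (3,1)
    simp at h
  · -- (3,2)
    simp only [List.cons.injEq, Letter.br.injEq, and_true] at h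
    exact absurd (List.append_eq_nil_iff.mp h.symm).1 hu'
  · -- (3,3)
    exact joinable_refl _

lemma ctx_cases {q : M (Option X)} (h : Ctx q) :
    (∃ a b : M X, q = emb a ++ starW ++ emb b) ∨
    (∃ (a b : M X) (q' : M (Option X)), IsStar q' ∧ Ctx q' ∧
      q = emb a ++ [Letter.br q'] ++ emb b) := by
  cases h with
  | top a b => exact Or.inl ⟨a, b, rfl⟩
  | nest a b q' h1 h2 => exact Or.inr ⟨a, b, q', h1, h2, rfl⟩

lemma core (hor : ∀ p ∈ SStar X, lt p.2 p.1) {α β : M X × M X}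
    (hα : α ∈ SStar X) (hβ : β ∈ SStar X) {q : M (Option X)} (hq : IsStar q)
    (h : α.1 = sub q β.1) :
    Joinable lt (SStar X) α.2 (sub q β.2) := by
  have hβ' : (β.1, β.2) ∈ SStar X := by rwa [Prod.mk.eta]
  obtain ⟨xβ, hxβ⟩ : ∃ x, β.1 = [Letter.br x] := by
    rcases hβ with ⟨w, hB⟩ | ⟨u, v, _, _, hB⟩ | hB <;> rw [hB] <;> exact ⟨_, rfl⟩
  rcases ctx_cases (ctx_of_isStar q hq) with ⟨a, b, rfl⟩ | ⟨a, b, q', hs, hC, rfl⟩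
  · -- top-level: β.1 occurs at the root, so α.1 = β.1
    rw [hxβ] at h
    obtain ⟨xα, hxα⟩ : ∃ x, α.1 = [Letter.br x] := by
      rcases hα with ⟨w, hA⟩ | ⟨u, v, _, _, hA⟩ | hA <;> rw [hA] <;> exact ⟨_, rfl⟩
    rw [hxα] at h
    simp only [sub_append, sub_emb, sub_starW] at h
    obtain ⟨ha, hb, hx⟩ := single_eq_mid (by simpa using h)
    subst ha; subst hb
    have h1 : α.1 = β.1 := by rw [hxα, hxβ, hx]
    have h2 : sub (emb ([] : M X) ++ starW ++ emb ([] : M X)) β.2 = β.2 := by simp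
    rw [h2]
    exact root hor hα hβ h1
  · -- nested inside a bracket: q = [br q'] (a = b = [])
    rw [hxβ] at h
    obtain ⟨xα, hxα⟩ : ∃ x, α.1 = [Letter.br x] := by
      rcases hα with ⟨w, hA⟩ | ⟨u, v, _, _, hA⟩ | hA <;> rw [hA] <;> exact ⟨_, rfl⟩
    rw [hxα] at h
    simp only [sub_append, sub_emb, sub_br] at h
    obtain ⟨ha, hb, hx⟩ := single_eq_mid (by simpa [L] using h)
    subst ha; subst hb
    have h2 : ∀ t : M X, sub (emb ([] : M X) ++ [Letter.br q'] ++ emb ([] : M X)) t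
        = L (sub q' t) := by intro t; simp [L]
    rw [h2]
    clear h hq
    have hx' : xα = sub q' β.1 := by rw [hxβ]; exact Letter.br.inj hx
    rcases hα with ⟨w, hA⟩ | ⟨u, v, hu, hv, hA⟩ | hA
    · -- α = (L (L w), w)
      have hxw : xα = L w := by
        have h3 : ([Letter.br (L w)] : M X) = [Letter.br xα] := by rw [← hxα, hA]; rfl
        simpa using h3.symm
      have hw : L w = sub q' β.1 := by rw [← hxw]; exact hx'
      have hα2 : α.2 = w := by rw [hA]
      rw [hα2]
      rcases ctx_cases hC with ⟨a', b', rfl⟩ | ⟨a', b', q'', hs'', hC'', rfl⟩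
      · -- q' = emb a' ++ starW ++ emb b' : β.1 = L w
        rw [hxβ] at hw
        simp only [sub_append, sub_emb, sub_starW] at hw
        obtain ⟨ha', hb', hxw2⟩ := single_eq_mid
          (show [Letter.br w] = a' ++ [Letter.br xβ] ++ b' by simpa [L] using hw)
        subst ha'; subst hb'
        have hsub : ∀ t : M X, sub (emb ([] : M X) ++ starW ++ emb ([] : M X)) t = t := by
          intro t; simp
        rw [hsub]
        have hβ1 : β.1 = L w := by
          rw [hxβ]
          exact congrArg (fun z => [Letter.br z]) (Letter.br.inj hxw2).symm
        rcases hβ with ⟨w', hB⟩ | ⟨u', v', hu', hv', hB⟩ | hB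
        · have h4 : L (L w') = L w := by rw [← hβ1, hB]
          have hww : w = L w' := by simpa [L] using h4.symm
          have hβ2 : β.2 = w' := by rw [hB]
          rw [hww, hβ2]
          exact joinable_refl _
        · have h4 : L (u' ++ v') = L w := by rw [← hβ1, hB]
          have hww : w = u' ++ v' := by simpa [L] using h4.symm
          have hβ2 : β.2 = L v' ++ L u' := by rw [hB]
          rw [hww, hβ2]
          refine ⟨u' ++ v', .refl, ?_⟩
          have s1 : Rew lt (SStar X) (L (L v' ++ L u')) (L (L u') ++ L (L v')) := by
            have := rew_step hor (mem2 (by simp [L] : (L v' : M X) ≠ [])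
              (by simp [L] : (L u' : M X) ≠ [])) (q := (starW : M (Option X))) isStar_starW
            simpa using this
          have s2 : Rew lt (SStar X) (L (L u') ++ L (L v')) (u' ++ L (L v')) := by
            have := rew_step hor (mem1 u')
              (q := emb ([] : M X) ++ starW ++ emb (L (L v'))) (isStar_glue _ _ isStar_starW)
            simpa using this
          have s3 : Rew lt (SStar X) (u' ++ L (L v')) (u' ++ v') := by
            have := rew_step hor (mem1 v')
              (q := emb u' ++ starW ++ emb ([] : M X)) (isStar_glue _ _ isStar_starW)
            simpa using this
          exact .head s1 (.head s2 (.single s3))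
        · have h4 : β.1 = L ([] : M X) := by rw [hB]
          have hww : w = [] := by
            have := h4 ▸ hβ1
            simpa [L] using this
          have hβ2 : β.2 = [] := by rw [hB]
          rw [hww, hβ2]
          refine ⟨[], .refl, .single ?_⟩
          have := rew_step hor mem3 (q := (starW : M (Option X))) isStar_starW
          simpa using this
      · -- q' = emb a' ++ [br q''] ++ emb b' : strictly nested
        simp only [sub_append, sub_emb, sub_br] at hw
        obtain ⟨ha', hb', hxw2⟩ := single_eq_mid
          (show [Letter.br w] = a' ++ [Letter.br (sub q'' β.1)] ++ b' by simpa [L] using hw)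
        subst ha'; subst hb'
        have hsub : ∀ t : M X,
            sub (emb ([] : M X) ++ [Letter.br q''] ++ emb ([] : M X)) t = L (sub q'' t) := by
          intro t; simp [L]
        rw [hsub]
        have hws : w = sub q'' β.1 := Letter.br.inj hxw2
        refine ⟨sub q'' β.2, .single ?_, .single ?_⟩
        · rw [hws]; exact rew_step hor hβ' hs''
        · have := rew_step hor (mem1 (sub q'' β.2)) (q := (starW : M (Option X))) isStar_starW
          simpa using this
    · -- α = (L (u ++ v), L v ++ L u)
      have hxw : xα = u ++ v := by
        have h3 : ([Letter.br (u ++ v)] : M X) = [Letter.br xα] := by rw [← hxα, hA]; rfl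
        simpa using h3.symm
      have hw : u ++ v = sub q' β.1 := by rw [← hxw]; exact hx'
      have hα2 : α.2 = L v ++ L u := by rw [hA]
      rw [hα2]
      rcases ctx_cases hC with ⟨a', b', rfl⟩ | ⟨a', b', q'', hs'', hC'', rfl⟩
      · -- β.1 at the top level of u ++ v
        rw [hxβ] at hw
        simp only [sub_append, sub_emb, sub_starW] at hw
        have hw' : u ++ v = a' ++ Letter.br xβ :: b' := by simpa using hw
        have hsub : ∀ t : M X, sub (emb a' ++ starW ++ emb b') t = a' ++ t ++ b' := by
          intro t; simp
        rw [hsub]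
        rcases split_mid hw' with ⟨c, hcu, hcb⟩ | ⟨c, hca, hcv⟩
        · -- inside u
          subst hcb
          by_cases hne : a' ++ β.2 ++ c = []
          · obtain ⟨ha', hβ2, hc⟩ : a' = [] ∧ β.2 = [] ∧ c = [] := by
              simp only [List.append_eq_nil_iff] at hne; tauto
            subst ha'; subst hc
            have s1 : Rew lt (SStar X) (L v ++ L u) (L v ++ L ([] : M X)) := by
              have := rew_step hor hβ'
                (q := emb (L v) ++ [Letter.br (emb ([] : M X) ++ starW ++ emb ([] : M X))]
                  ++ emb ([] : M X))
                (isStar_glue _ _ (isStar_br (isStar_glue _ _ isStar_starW)))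
              rw [hcu]
              simpa [hxβ, hβ2, L] using this
            have s2 : Rew lt (SStar X) (L v ++ L ([] : M X)) (L v) := by
              have := rew_step hor mem3
                (q := emb (L v) ++ starW ++ emb ([] : M X)) (isStar_glue _ _ isStar_starW)
              simpa using this
            exact ⟨L v, .head s1 (.single s2), by
              simp only [hβ2, List.nil_append, List.append_nil]
              exact Relation.ReflTransGen.refl⟩
          · refine ⟨L v ++ L (a' ++ β.2 ++ c), .single ?_, .single ?_⟩
            · have := rew_step hor hβ'
                (q := emb (L v) ++ [Letter.br (emb a' ++ starW ++ emb c)] ++ emb ([] : M X))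
                (isStar_glue _ _ (isStar_br (isStar_glue _ _ isStar_starW)))
              rw [hcu]
              simpa [hxβ, L] using this
            · have := rew_step hor (mem2 hne hv) (q := (starW : M (Option X))) isStar_starW
              simpa [L] using this
        · -- inside v
          subst hca
          by_cases hne : c ++ β.2 ++ b' = []
          · obtain ⟨hc, hβ2, hb'⟩ : c = [] ∧ β.2 = [] ∧ b' = [] := by
              simp only [List.append_eq_nil_iff] at hne; tauto
            subst hc; subst hb'
            have s1 : Rew lt (SStar X) (L v ++ L u) (L ([] : M X) ++ L u) := by
              have := rew_step hor hβ'
                (q := emb ([] : M X) ++ [Letter.br (emb ([] : M X) ++ starW ++ emb ([] : M X))]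
                  ++ emb (L u))
                (isStar_glue _ _ (isStar_br (isStar_glue _ _ isStar_starW)))
              rw [hcv]
              simpa [hxβ, hβ2, L] using this
            have s2 : Rew lt (SStar X) (L ([] : M X) ++ L u) (L u) := by
              have := rew_step hor mem3
                (q := emb ([] : M X) ++ starW ++ emb (L u)) (isStar_glue _ _ isStar_starW)
              simpa using this
            exact ⟨L u, .head s1 (.single s2), by
              simp only [hβ2, List.nil_append, List.append_nil]
              exact Relation.ReflTransGen.refl⟩
          · refine ⟨L (c ++ β.2 ++ b') ++ L u, .single ?_, .single ?_⟩
            · have := rew_step hor hβ'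
                (q := emb ([] : M X) ++ [Letter.br (emb c ++ starW ++ emb b')] ++ emb (L u))
                (isStar_glue _ _ (isStar_br (isStar_glue _ _ isStar_starW)))
              rw [hcv]
              simpa [hxβ, L] using this
            · have := rew_step hor (mem2 hu hne) (q := (starW : M (Option X))) isStar_starW
              simpa [L] using this
      · -- β.1 nested inside a letter of u ++ v
        simp only [sub_append, sub_emb, sub_br] at hw
        have hw' : u ++ v = a' ++ Letter.br (sub q'' β.1) :: b' := by simpa [L] using hw
        have hsub : ∀ t : M X, sub (emb a' ++ [Letter.br q''] ++ emb b') t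
            = a' ++ Letter.br (sub q'' t) :: b' := by intro t; simp
        rw [hsub]
        rcases split_mid hw' with ⟨c, hcu, hcb⟩ | ⟨c, hca, hcv⟩
        · subst hcb
          refine ⟨L v ++ L (a' ++ Letter.br (sub q'' β.2) :: c), .single ?_, .single ?_⟩
          · have := rew_step hor hβ'
              (q := emb (L v) ++ [Letter.br (emb a' ++ [Letter.br q''] ++ emb c)]
                ++ emb ([] : M X))
              (isStar_glue _ _ (isStar_br (isStar_glue _ _ (isStar_br hs''))))
            rw [hcu]
            simpa [L] using this
          · have hne : a' ++ Letter.br (sub q'' β.2) :: c ≠ [] := by simp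
            have := rew_step hor (mem2 hne hv) (q := (starW : M (Option X))) isStar_starW
            simpa [L] using this
        · subst hca
          refine ⟨L (c ++ Letter.br (sub q'' β.2) :: b') ++ L u, .single ?_, .single ?_⟩
          · have := rew_step hor hβ'
              (q := emb ([] : M X) ++ [Letter.br (emb c ++ [Letter.br q''] ++ emb b')]
                ++ emb (L u))
              (isStar_glue _ _ (isStar_br (isStar_glue _ _ (isStar_br hs''))))
            rw [hcv]
            simpa [L] using this
          · have hne : c ++ Letter.br (sub q'' β.2) :: b' ≠ [] := by simp
            have := rew_step hor (mem2 hu hne) (q := (starW : M (Option X))) isStar_starW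
            simpa [L] using this
    · -- α = (L [], []) : impossible nested
      have hx0 : xα = ([] : M X) := by
        have h3 : ([Letter.br ([] : M X)] : M X) = [Letter.br xα] := by rw [← hxα, hA]; rfl
        simpa using h3.symm
      rw [hx0] at hx'
      rcases ctx_cases hC with ⟨a', b', rfl⟩ | ⟨a', b', q'', _, _, rfl⟩
      · rw [hxβ] at hx'; simp at hx'
      · simp at hx'

end Aux

/-- nested placements of `∗`-monoid rules are joinable. -/
theorem sstar_nested_joinable (X : Type) (lt : M X → M X → Prop)
    (hlt : IsMonomialOrder lt) (hor : ∀ p ∈ SStar X, lt p.2 p.1)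
    (α β : M X × M X) (hα : α ∈ SStar X) (hβ : β ∈ SStar X)
    (q₁ q₂ : M (Option X)) (hq₁ : IsStar q₁) (hq₂ : IsStar q₂)
    (h : sub q₁ α.1 = sub q₂ β.1)
    (hnest : Nested q₁ q₂) :
    Joinable lt (SStar X) (sub q₁ α.2) (sub q₂ β.2) := by
  obtain ⟨q, hq, hc | hc⟩ := hnest
  · subst hc
    rw [sub_subS] at h ⊢
    exact joinable_ctx (core hor hα hβ hq (sub_inj hq₁ h)) hq₁
  · subst hc
    rw [sub_subS] at h ⊢
    exact joinable_symm (joinable_ctx (core hor hβ hα hq (sub_inj hq₂ h).symm) hq₂)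

end OpMon
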